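/- arXiv:1409.6881 — 2 statements merged into one kernel-verified Lean document; each statement's English description precedes it below -/
import Mathlib

section
/- Define φ₀(x, y) to hold iff for all e ≤ x, if the e-th partial computable function φ_e halts on input x, then y > φ_e(x). Then for every x there exists y such that φ₀(x, y) holds, but there is no computable function F : ℕ → List ℕ such that for every x some y in F(x) satisfies φ₀(x, y). -/
open Nat.Partrec (Code)

/-- The e-th partial computable function. -/
noncomputable def phiE (e : ℕ) : ℕ →. ℕ := (Denumerable.ofNat Code e).eval

/-- φ₀(x,y): for all e ≤ x, if φ_e(x) halts then y > φ_e(x). -/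
def phi0 (x y : ℕ) : Prop := ∀ e : ℕ, e ≤ x → ∀ v : ℕ, v ∈ phiE e x → v < y

lemma le_foldr_max {a : ℕ} : ∀ {l : List ℕ}, a ∈ l → a ≤ l.foldr max 0
  | b :: t, h => by
    rcases List.mem_cons.1 h with rfl | h
    · exact le_max_left _ _
    · exact le_trans (le_foldr_max h) (le_max_right _ _)

/-- For every x there is a y with φ₀(x,y), but no computable Herbrand
list-valued choice function produces witnesses. -/
theorem herbrand_choice_fails :
    (∀ x : ℕ, ∃ y : ℕ, phi0 x y) ∧
    ¬ ∃ F : ℕ → List ℕ, Computable F ∧ ∀ x : ℕ, ∃ y ∈ F x, phi0 x y := by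
  classical
  constructor
  · intro x
    refine ⟨((Finset.range (x+1)).sup fun e =>
        if h : (phiE e x).Dom then (phiE e x).get h else 0) + 1, ?_⟩
    intro e he v hv
    obtain ⟨h, hg⟩ := hv
    have : v ≤ (Finset.range (x+1)).sup fun e =>
        if h : (phiE e x).Dom then (phiE e x).get h else 0 := by
      have := Finset.le_sup (f := fun e =>
        if h : (phiE e x).Dom then (phiE e x).get h else 0)
        (Finset.mem_range.2 (Nat.lt_succ_of_le he))
      simpa [dif_pos h, hg] using this
    omega
  · rintro ⟨F, hF, hw⟩
    set G : ℕ → ℕ := fun x => (F x).foldr max 0 with hGdef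
    have hmax : Computable (fun l : List ℕ => l.foldr max 0) :=
      (Primrec.list_foldr Primrec.id (Primrec.const 0)
        (Primrec.nat_max.comp (Primrec.fst.comp Primrec.snd)
          (Primrec.snd.comp Primrec.snd)).to₂).to_comp
    have hG : Computable G := hmax.comp hF
    have hGphi : ∀ x, phi0 x (G x) := by
      intro x e he v hv
      obtain ⟨y, hy, hphi⟩ := hw x
      exact lt_of_lt_of_le (hphi e he v hv) (le_foldr_max hy)
    have hpart : Nat.Partrec (fun n => Part.some (G n)) := by
      have := hG.partrec
      rw [Partrec.nat_iff] at this
      exact this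
    obtain ⟨c, hc⟩ := Nat.Partrec.Code.exists_code.1 hpart
    have := hGphi (Encodable.encode c) (Encodable.encode c) le_rfl (G (Encodable.encode c)) ?_
    · exact lt_irrefl _ this
    · show G (Encodable.encode c) ∈ phiE (Encodable.encode c) (Encodable.encode c)
      simp [phiE, Denumerable.ofNat_encode, hc]
end

section
/- If there exists ν : (ℕ → ℕ) → (ℕ → ℕ) such that for all f, (∃g, ∀x, f(g↾x) = 0) → ∀x, f((ν f)↾x) = 0, then there exists μ : (ℕ → ℕ) → ℕ such that for all f, (∃x, f(x) = 0) → f(μ(f)) = 0. -/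
/-- `initSeg g x` codes the finite initial segment `(g 0, …, g (x-1))`. -/
def initSeg (g : ℕ → ℕ) (x : ℕ) : ℕ :=
  Encodable.encode (List.ofFn (fun i : Fin x => g i))

/-- Tree functional associated to `f`: a code is "in the tree" (value 0) iff it
codes a list that is empty or whose head is a zero of `f`. -/
def treeFn (f : ℕ → ℕ) (c : ℕ) : ℕ :=
  match (Encodable.decode (α := List ℕ) c) with
  | some (a :: _) => f a
  | _ => 0

lemma treeFn_initSeg_one (f g : ℕ → ℕ) : treeFn f (initSeg g 1) = f (g 0) := by
  unfold treeFn initSeg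
  rw [Encodable.encodek]
  simp [List.ofFn_succ]

/-- The Π¹₁ witnessing functional (ν) yields the μ-operator (μ²). -/
theorem nu_implies_mu
    (h : ∃ ν : (ℕ → ℕ) → (ℕ → ℕ), ∀ f : ℕ → ℕ,
        (∃ g : ℕ → ℕ, ∀ x : ℕ, f (initSeg g x) = 0) →
          ∀ x : ℕ, f (initSeg (ν f) x) = 0) :
    ∃ μ : (ℕ → ℕ) → ℕ, ∀ f : ℕ → ℕ, (∃ x, f x = 0) → f (μ f) = 0 := by
  obtain ⟨ν, hν⟩ := h
  refine ⟨fun f => ν (treeFn f) 0, fun f ⟨x₀, hx₀⟩ => ?_⟩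
  have key : ∀ x : ℕ, treeFn f (initSeg (ν (treeFn f)) x) = 0 := by
    apply hν
    refine ⟨fun _ => x₀, fun x => ?_⟩
    unfold treeFn initSeg
    rw [Encodable.encodek]
    cases x with
    | zero => simp
    | succ n => simp [List.ofFn_succ, hx₀]
  have := key 1
  rwa [treeFn_initSeg_one] at this
end
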